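/- Let M > 0, k ∈ (−1,1), and η ∈ (0,π/2). Define S : [0,∞)² → ℝ by S(u,v) = √(2√2/M)·[ (cos²η/(2√(1+k)))·( U√(1+U²) + log(U + √(1+U²)) ) + (sin²η/(2√(1−k)))·( V√(1+V²) + log(V + √(1+V²)) ) ], where U = √(1+k)·u/cos η and V = √(1−k)·v/sin η. Then for all u,v ≥ 0, (∂S/∂u)² + (∂S/∂v)² = (2√2/M)·(1 + (1+k)u² + (1−k)v²); equivalently, S solves the eikonal equation |∇S| = 1 for the conformal metric g_Σ = (2√2/M)(1+(1+k)u²+(1−k)v²)(du²+dv²). In fact ∂S/∂u = √(2√2/M)·√(cos²η + (1+k)u²) and ∂S/∂v = √(2√2/M)·√(sin²η + (1−k)v²). -/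

import Mathlib

open Real

/-- The separated distance function `S_η` of the generalized Taub-NUT polytope metric,
in adapted quadratic coordinates. -/
noncomputable def Sdist (M k η : ℝ) (u v : ℝ) : ℝ :=
  let U := Real.sqrt (1 + k) * u / Real.cos η
  let V := Real.sqrt (1 - k) * v / Real.sin η
  Real.sqrt (2 * Real.sqrt 2 / M) *
    ((Real.cos η ^ 2 / (2 * Real.sqrt (1 + k))) *
        (U * Real.sqrt (1 + U ^ 2) + Real.log (U + Real.sqrt (1 + U ^ 2))) +
     (Real.sin η ^ 2 / (2 * Real.sqrt (1 - k))) *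
        (V * Real.sqrt (1 + V ^ 2) + Real.log (V + Real.sqrt (1 + V ^ 2))))

lemma F_deriv (x : ℝ) :
    HasDerivAt (fun x => x * Real.sqrt (1 + x ^ 2) + Real.log (x + Real.sqrt (1 + x ^ 2)))
      (2 * Real.sqrt (1 + x ^ 2)) x := by
  have h1 : (0:ℝ) < 1 + x ^ 2 := by positivity
  have hs : 0 < Real.sqrt (1 + x ^ 2) := Real.sqrt_pos.mpr h1
  have hsq : HasDerivAt (fun x : ℝ => Real.sqrt (1 + x ^ 2)) (x / Real.sqrt (1 + x ^ 2)) x := by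
    have inner : HasDerivAt (fun x : ℝ => 1 + x ^ 2) (2 * x) x := by
      simpa using ((hasDerivAt_pow 2 x).const_add 1)
    have := (Real.hasDerivAt_sqrt h1.ne').comp x inner
    refine this.congr_deriv ?_
    symm
    field_simp
  have habsx : |x| < Real.sqrt (1 + x ^ 2) := by
    rw [← Real.sqrt_sq_eq_abs]
    exact Real.sqrt_lt_sqrt (by positivity) (by linarith)
  have hpos : 0 < x + Real.sqrt (1 + x ^ 2) := by
    have := neg_abs_le x
    linarith
  have hmul : HasDerivAt (fun x : ℝ => x * Real.sqrt (1 + x ^ 2))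
      (1 * Real.sqrt (1 + x ^ 2) + x * (x / Real.sqrt (1 + x ^ 2))) x :=
    (hasDerivAt_id x).mul hsq
  have hlog : HasDerivAt (fun x : ℝ => Real.log (x + Real.sqrt (1 + x ^ 2)))
      ((1 + x / Real.sqrt (1 + x ^ 2)) / (x + Real.sqrt (1 + x ^ 2))) x :=
    ((hasDerivAt_id x).add hsq).log hpos.ne'
  have := hmul.add hlog
  refine this.congr_deriv ?_
  symm
  have h2 : Real.sqrt (1 + x ^ 2) ^ 2 = 1 + x ^ 2 := Real.sq_sqrt h1.le
  field_simp
  linear_combination (x + Real.sqrt (1 + x ^ 2)) * h2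

lemma piece_deriv (a c t : ℝ) (ha : 0 < a) (hc : 0 < c) :
    HasDerivAt (fun t : ℝ => (c ^ 2 / (2 * a)) *
        ((a * t / c) * Real.sqrt (1 + (a * t / c) ^ 2) +
          Real.log (a * t / c + Real.sqrt (1 + (a * t / c) ^ 2))))
      (Real.sqrt (c ^ 2 + a ^ 2 * t ^ 2)) t := by
  have hin : HasDerivAt (fun t : ℝ => a * t / c) (a / c) t := by
    simpa using ((hasDerivAt_id t).const_mul a).div_const c
  have h := ((F_deriv (a * t / c)).comp t hin).const_mul (c ^ 2 / (2 * a))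
  refine h.congr_deriv ?_
  symm
  have key : Real.sqrt (c ^ 2 + a ^ 2 * t ^ 2) = c * Real.sqrt (1 + (a * t / c) ^ 2) := by
    rw [← Real.sqrt_sq hc.le, ← Real.sqrt_mul (by positivity)]
    congr 1
    field_simp
    ring
    exact Real.sq_sqrt (sq_nonneg c)
  rw [key]
  field_simp

/-- `S_η` solves the eikonal equation `|∇S| = 1` for the generalized Taub-NUT polytope
metric `g_Σ = (2√2/M)(1+(1+k)u²+(1-k)v²)(du²+dv²)` on the first quadrant; in fact its
partial derivatives are computed explicitly. -/
theorem stmt_3 (M k η : ℝ) (hM : 0 < M) (hk : k ∈ Set.Ioo (-1 : ℝ) 1)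
    (hη : η ∈ Set.Ioo 0 (Real.pi / 2)) :
    ∀ u v : ℝ, 0 ≤ u → 0 ≤ v →
      deriv (fun t => Sdist M k η t v) u
        = Real.sqrt (2 * Real.sqrt 2 / M) * Real.sqrt (Real.cos η ^ 2 + (1 + k) * u ^ 2) ∧
      deriv (fun t => Sdist M k η u t) v
        = Real.sqrt (2 * Real.sqrt 2 / M) * Real.sqrt (Real.sin η ^ 2 + (1 - k) * v ^ 2) ∧
      (deriv (fun t => Sdist M k η t v) u) ^ 2 + (deriv (fun t => Sdist M k η u t) v) ^ 2
        = (2 * Real.sqrt 2 / M) * (1 + (1 + k) * u ^ 2 + (1 - k) * v ^ 2) := by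
  intro u v hu hv
  obtain ⟨hk1, hk2⟩ := hk
  obtain ⟨hη1, hη2⟩ := hη
  have hk1' : (0:ℝ) < 1 + k := by linarith
  have hk2' : (0:ℝ) < 1 - k := by linarith
  have ha : 0 < Real.sqrt (1 + k) := Real.sqrt_pos.mpr hk1'
  have hb : 0 < Real.sqrt (1 - k) := Real.sqrt_pos.mpr hk2'
  have hc : 0 < Real.cos η := Real.cos_pos_of_mem_Ioo ⟨by linarith [Real.pi_pos], hη2⟩
  have hs : 0 < Real.sin η := Real.sin_pos_of_pos_of_lt_pi hη1 (by linarith [Real.pi_pos])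
  have hA : (0:ℝ) ≤ 2 * Real.sqrt 2 / M := by positivity
  set A := 2 * Real.sqrt 2 / M with hAdef
  have ha2 : Real.sqrt (1 + k) ^ 2 = 1 + k := Real.sq_sqrt hk1'.le
  have hb2 : Real.sqrt (1 - k) ^ 2 = 1 - k := Real.sq_sqrt hk2'.le
  -- u-derivative
  have hdu : deriv (fun t => Sdist M k η t v) u
      = Real.sqrt A * Real.sqrt (Real.cos η ^ 2 + (1 + k) * u ^ 2) := by
    have h := (((piece_deriv (Real.sqrt (1 + k)) (Real.cos η) u ha hc).add_const
        ((Real.sin η ^ 2 / (2 * Real.sqrt (1 - k))) *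
          ((Real.sqrt (1 - k) * v / Real.sin η) *
              Real.sqrt (1 + (Real.sqrt (1 - k) * v / Real.sin η) ^ 2) +
            Real.log (Real.sqrt (1 - k) * v / Real.sin η +
              Real.sqrt (1 + (Real.sqrt (1 - k) * v / Real.sin η) ^ 2))))).const_mul
        (Real.sqrt A)).deriv
    rw [show (fun t => Sdist M k η t v) = (fun t => Real.sqrt A *
        ((Real.cos η ^ 2 / (2 * Real.sqrt (1 + k))) *
          ((Real.sqrt (1 + k) * t / Real.cos η) *
              Real.sqrt (1 + (Real.sqrt (1 + k) * t / Real.cos η) ^ 2) +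
            Real.log (Real.sqrt (1 + k) * t / Real.cos η +
              Real.sqrt (1 + (Real.sqrt (1 + k) * t / Real.cos η) ^ 2))) +
          (Real.sin η ^ 2 / (2 * Real.sqrt (1 - k))) *
          ((Real.sqrt (1 - k) * v / Real.sin η) *
              Real.sqrt (1 + (Real.sqrt (1 - k) * v / Real.sin η) ^ 2) +
            Real.log (Real.sqrt (1 - k) * v / Real.sin η +
              Real.sqrt (1 + (Real.sqrt (1 - k) * v / Real.sin η) ^ 2))))) from rfl]
    rw [h, ha2]
  have hdv : deriv (fun t => Sdist M k η u t) v
      = Real.sqrt A * Real.sqrt (Real.sin η ^ 2 + (1 - k) * v ^ 2) := by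
    have h := (((piece_deriv (Real.sqrt (1 - k)) (Real.sin η) v hb hs).const_add
        ((Real.cos η ^ 2 / (2 * Real.sqrt (1 + k))) *
          ((Real.sqrt (1 + k) * u / Real.cos η) *
              Real.sqrt (1 + (Real.sqrt (1 + k) * u / Real.cos η) ^ 2) +
            Real.log (Real.sqrt (1 + k) * u / Real.cos η +
              Real.sqrt (1 + (Real.sqrt (1 + k) * u / Real.cos η) ^ 2))))).const_mul
        (Real.sqrt A)).deriv
    rw [show (fun t => Sdist M k η u t) = (fun t => Real.sqrt A *
        ((Real.cos η ^ 2 / (2 * Real.sqrt (1 + k))) *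
          ((Real.sqrt (1 + k) * u / Real.cos η) *
              Real.sqrt (1 + (Real.sqrt (1 + k) * u / Real.cos η) ^ 2) +
            Real.log (Real.sqrt (1 + k) * u / Real.cos η +
              Real.sqrt (1 + (Real.sqrt (1 + k) * u / Real.cos η) ^ 2))) +
          (Real.sin η ^ 2 / (2 * Real.sqrt (1 - k))) *
          ((Real.sqrt (1 - k) * t / Real.sin η) *
              Real.sqrt (1 + (Real.sqrt (1 - k) * t / Real.sin η) ^ 2) +
            Real.log (Real.sqrt (1 - k) * t / Real.sin η +
              Real.sqrt (1 + (Real.sqrt (1 - k) * t / Real.sin η) ^ 2))))) from rfl]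
    rw [h, hb2]
  refine ⟨hdu, hdv, ?_⟩
  rw [hdu, hdv]
  have hA2 : Real.sqrt A ^ 2 = A := Real.sq_sqrt hA
  have h1 : Real.sqrt (Real.cos η ^ 2 + (1 + k) * u ^ 2) ^ 2
      = Real.cos η ^ 2 + (1 + k) * u ^ 2 := Real.sq_sqrt (by positivity)
  have h2 : Real.sqrt (Real.sin η ^ 2 + (1 - k) * v ^ 2) ^ 2
      = Real.sin η ^ 2 + (1 - k) * v ^ 2 := Real.sq_sqrt (by positivity)
  have hpyth := Real.sin_sq_add_cos_sq η
  rw [mul_pow, mul_pow, hA2, h1, h2]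
  nlinarith [hpyth]
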